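/- Let q ∈ (0,1), β ≥ 0, α_q ≥ 1/(q−1), and let a : [0,T] → [0,∞) be an integrable function; set A(t,u) = ∫_t^u a(s) ds for t ≤ u, and define the hq-entropic risk measure on losses ρ^{hq}_{tu}(X) = ln_q E[exp_q((X+β)⁻ + α_q + A(t,u)) | 𝓕_t]. Then (ρ^{hq}_{tu}) satisfies h-longevity: for all 0 ≤ t ≤ u ≤ v ≤ T and every X ∈ L^∞(𝓕_u), ρ^{hq}_{tu}(X) ≤ ρ^{hq}_{tv}(X) almost surely. -/

import Mathlib

open MeasureTheory Real
open scoped ENNReal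

/-- Tsallis generalized exponential `exp_q(x) = (1+(1-q)x)^{1/(1-q)}`. -/
noncomputable def expq (q x : ℝ) : ℝ := (1 + (1 - q) * x) ^ ((1 : ℝ) / (1 - q))

/-- Tsallis generalized logarithm `ln_q(x) = (x^{1-q} - 1)/(1-q)`. -/
noncomputable def lnq (q x : ℝ) : ℝ := (x ^ (1 - q) - 1) / (1 - q)

lemma expq_nonneg (q x : ℝ) (hx : 0 ≤ 1 + (1 - q) * x) : 0 ≤ expq q x :=
  Real.rpow_nonneg hx _

lemma expq_mono {q x y : ℝ} (hq : q < 1) (hx : 0 ≤ 1 + (1 - q) * x) (hxy : x ≤ y) :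
    expq q x ≤ expq q y := by
  have h1q : 0 < 1 - q := by linarith
  exact Real.rpow_le_rpow hx (by nlinarith) (by positivity)

lemma lnq_mono {q x y : ℝ} (hq : q < 1) (hx : 0 ≤ x) (hxy : x ≤ y) :
    lnq q x ≤ lnq q y := by
  have h1q : 0 < 1 - q := by linarith
  have := Real.rpow_le_rpow hx hxy h1q.le
  unfold lnq
  exact div_le_div_of_nonneg_right (by linarith) h1q.le

/-- The hq-entropic risk measure on losses
`ρ^{hq}_{tu}(X) = ln_q E[exp_q((X+β)⁻ + α_q + ∫_t^u a(s) ds) | 𝓕_t]`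
satisfies h-longevity: `ρ^{hq}_{tu}(X) ≤ ρ^{hq}_{tv}(X)` a.s. for `t ≤ u ≤ v` and
`X ∈ L^∞(𝓕_u)`. -/
theorem hq_entropic_h_longevity
    {Ω : Type*} {m0 : MeasurableSpace Ω} (P : Measure Ω) [IsProbabilityMeasure P]
    (T : ℝ) (hT : 0 ≤ T) (ℱ : Filtration ℝ m0)
    (q β αq : ℝ) (hq : q ∈ Set.Ioo (0 : ℝ) 1) (hβ : 0 ≤ β)
    (hαq : 1 / (q - 1) ≤ αq)
    (a : ℝ → ℝ) (ha_nonneg : ∀ s, 0 ≤ a s)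
    (ha_int : IntervalIntegrable a MeasureTheory.volume 0 T) :
    ∀ t u v : ℝ, 0 ≤ t → t ≤ u → u ≤ v → v ≤ T →
      ∀ X : Ω → ℝ, StronglyMeasurable[ℱ u] X → MemLp X ⊤ P →
        ∀ᵐ ω ∂P,
          lnq q ((P[fun ω' =>
              expq q (max (-(X ω' + β)) 0 + αq + ∫ s in t..u, a s) | ℱ t]) ω)
            ≤ lnq q ((P[fun ω' =>
              expq q (max (-(X ω' + β)) 0 + αq + ∫ s in t..v, a s) | ℱ t]) ω) := by
  intro t u v ht htu huv hvT X hXmeas hXbdd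
  have hq1 : q < 1 := hq.2
  have h1q : 0 < 1 - q := by linarith
  -- integrability of a on subintervals
  have hsub : ∀ {b c : ℝ}, 0 ≤ b → b ≤ c → c ≤ T →
      IntervalIntegrable a MeasureTheory.volume b c := by
    intro b c hb hbc hcT
    refine ha_int.mono_set ?_
    rw [Set.uIcc_of_le hbc, Set.uIcc_of_le hT]
    exact Set.Icc_subset_Icc hb hcT
  have hI1 : IntervalIntegrable a MeasureTheory.volume t u := hsub ht htu (huv.trans hvT)
  have hI2 : IntervalIntegrable a MeasureTheory.volume u v := hsub (ht.trans htu) huv hvT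
  set c1 : ℝ := ∫ s in t..u, a s with hc1def
  set c2 : ℝ := ∫ s in t..v, a s with hc2def
  have hc1nonneg : 0 ≤ c1 :=
    intervalIntegral.integral_nonneg htu (fun s _ => ha_nonneg s)
  have hcc : c1 ≤ c2 := by
    have : c2 = c1 + ∫ s in u..v, a s :=
      (intervalIntegral.integral_add_adjacent_intervals hI1 hI2).symm
    have h2 : 0 ≤ ∫ s in u..v, a s :=
      intervalIntegral.integral_nonneg huv (fun s _ => ha_nonneg s)
    linarith
  -- lower bound for arguments of expq
  have hαq' : -(1 / (1 - q)) ≤ αq := by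
    have h : 1 / (q - 1) = -(1 / (1 - q)) := by
      rw [← neg_sub 1 q, div_neg]
    linarith [hαq]
  have hbase : ∀ (g c : ℝ), 0 ≤ g → 0 ≤ c → 0 ≤ 1 + (1 - q) * (g + αq + c) := by
    intro g c hg hc
    have : -(1 / (1 - q)) ≤ g + αq + c := by linarith
    have h2 : -1 ≤ (1 - q) * (g + αq + c) := by
      have := mul_le_mul_of_nonneg_left this h1q.le
      have hne : (1 - q) * (-(1 / (1 - q))) = -1 := by
        field_simp
      linarith [hne ▸ this]
    linarith
  set g : Ω → ℝ := fun ω => max (-(X ω + β)) 0 with hgdef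
  have hgnonneg : ∀ ω, 0 ≤ g ω := fun ω => le_max_right _ _
  set f1 : Ω → ℝ := fun ω => expq q (g ω + αq + c1) with hf1def
  set f2 : Ω → ℝ := fun ω => expq q (g ω + αq + c2) with hf2def
  -- pointwise inequality
  have hle : ∀ ω, f1 ω ≤ f2 ω := by
    intro ω
    exact expq_mono hq1 (hbase _ _ (hgnonneg ω) hc1nonneg) (by linarith)
  have hf1nonneg : ∀ ω, 0 ≤ f1 ω := fun ω =>
    expq_nonneg _ _ (hbase _ _ (hgnonneg ω) hc1nonneg)
  have hf2nonneg : ∀ ω, 0 ≤ f2 ω := fun ω =>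
    expq_nonneg _ _ (hbase _ _ (hgnonneg ω) (hc1nonneg.trans hcc))
  -- measurability
  have hXm : StronglyMeasurable X := hXmeas.mono (ℱ.le u)
  have hmeas : ∀ c : ℝ, StronglyMeasurable (fun ω => expq q (g ω + αq + c)) := by
    intro c
    have hcont : Continuous fun x : ℝ => expq q (max (-(x + β)) 0 + αq + c) := by
      unfold expq
      apply Continuous.rpow_const
      · continuity
      · intro x
        right
        positivity
    exact hcont.comp_stronglyMeasurable hXm
  -- boundedness and integrability
  obtain ⟨-, hXtop⟩ := hXbdd
  rw [eLpNorm_exponent_top] at hXtop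
  set C : ℝ := (eLpNormEssSup X P).toReal with hCdef
  have hCnonneg : 0 ≤ C := ENNReal.toReal_nonneg
  have hXC : ∀ᵐ ω ∂P, ‖X ω‖ ≤ C := by
    filter_upwards [ae_le_eLpNormEssSup (f := X) (μ := P)] with ω hω
    have : (‖X ω‖₊ : ℝ≥0∞) ≤ eLpNormEssSup X P := hω
    calc ‖X ω‖ = ((‖X ω‖₊ : ℝ≥0∞)).toReal := by simp
    _ ≤ C := ENNReal.toReal_mono hXtop.ne this
  have hint : ∀ c : ℝ, 0 ≤ c → Integrable (fun ω => expq q (g ω + αq + c)) P := by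
    intro c hc
    refine (memLp_top_of_bound (hmeas c).aestronglyMeasurable
      (expq q (C + β + αq + c)) ?_).integrable le_top
    filter_upwards [hXC] with ω hω
    rw [Real.norm_eq_abs, abs_of_nonneg (expq_nonneg _ _ (hbase _ _ (hgnonneg ω) hc))]
    apply expq_mono hq1 (hbase _ _ (hgnonneg ω) hc)
    have hXabs : |X ω| ≤ C := by rwa [Real.norm_eq_abs] at hω
    have : g ω ≤ C + β :=
      max_le (by linarith [neg_le_abs (X ω)]) (by linarith)
    linarith
  have hint1 : Integrable f1 P := hint c1 hc1nonneg
  have hint2 : Integrable f2 P := hint c2 (hc1nonneg.trans hcc)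
  -- conditional expectation monotonicity
  have hcond : (P[f1 | ℱ t]) ≤ᵐ[P] (P[f2 | ℱ t]) :=
    condExp_mono hint1 hint2 (Filter.Eventually.of_forall hle)
  have hcondnn : 0 ≤ᵐ[P] (P[f1 | ℱ t]) :=
    condExp_nonneg (Filter.Eventually.of_forall hf1nonneg)
  filter_upwards [hcond, hcondnn] with ω h1 h2
  exact lnq_mono hq1 h2 h1
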